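/- Sklar's theorem, uniqueness part: if F and G are continuous distribution functions and C, C' are copulas with C(F(x), G(y)) = C'(F(x), G(y)) for all real x, y, then C = C' on [0,1]². -/
import Mathlib


open Set

/-- A bivariate copula on [0,1]². -/
structure Copula where
  toFun : ℝ → ℝ → ℝ
  mem_Icc : ∀ u ∈ Icc (0:ℝ) 1, ∀ v ∈ Icc (0:ℝ) 1, toFun u v ∈ Icc (0:ℝ) 1
  grounded_left : ∀ u ∈ Icc (0:ℝ) 1, toFun u 0 = 0
  grounded_right : ∀ v ∈ Icc (0:ℝ) 1, toFun 0 v = 0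
  margin_left : ∀ u ∈ Icc (0:ℝ) 1, toFun u 1 = u
  margin_right : ∀ v ∈ Icc (0:ℝ) 1, toFun 1 v = v
  two_increasing : ∀ u₁ ∈ Icc (0:ℝ) 1, ∀ u₂ ∈ Icc (0:ℝ) 1, ∀ v₁ ∈ Icc (0:ℝ) 1,
    ∀ v₂ ∈ Icc (0:ℝ) 1, u₁ ≤ u₂ → v₁ ≤ v₂ →
      0 ≤ toFun u₂ v₂ - toFun u₂ v₁ - toFun u₁ v₂ + toFun u₁ v₁

open Filter in
lemma surj_aux (F : ℝ → ℝ) (hFc : Continuous F)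
    (hF0 : Tendsto F atBot (nhds 0)) (hF1 : Tendsto F atTop (nhds 1))
    {u : ℝ} (hu : u ∈ Ioo (0:ℝ) 1) : ∃ x, F x = u := by
  obtain ⟨a, ha⟩ := (hF0.eventually (gt_mem_nhds hu.1)).exists
  obtain ⟨b, hb⟩ := (hF1.eventually (lt_mem_nhds hu.2)).exists
  exact intermediate_value_univ a b hFc ⟨ha.le, hb.le⟩

open Filter in
/-- Uniqueness part of Sklar's theorem for continuous marginals. -/
theorem sklar_uniqueness (F G : ℝ → ℝ) (hFc : Continuous F) (hGc : Continuous G)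
    (hFm : Monotone F) (hGm : Monotone G)
    (hF0 : Tendsto F atBot (nhds 0)) (hF1 : Tendsto F atTop (nhds 1))
    (hG0 : Tendsto G atBot (nhds 0)) (hG1 : Tendsto G atTop (nhds 1))
    (C C' : Copula)
    (h : ∀ x y : ℝ, C.toFun (F x) (G y) = C'.toFun (F x) (G y)) :
    ∀ u ∈ Icc (0:ℝ) 1, ∀ v ∈ Icc (0:ℝ) 1, C.toFun u v = C'.toFun u v := by
  intro u hu v hv
  rcases eq_or_lt_of_le hu.1 with h0u | h0u
  · rw [← h0u, C.grounded_right v hv, C'.grounded_right v hv]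
  rcases eq_or_lt_of_le hu.2 with hu1 | hu1
  · rw [hu1, C.margin_right v hv, C'.margin_right v hv]
  rcases eq_or_lt_of_le hv.1 with h0v | h0v
  · rw [← h0v, C.grounded_left u hu, C'.grounded_left u hu]
  rcases eq_or_lt_of_le hv.2 with hv1 | hv1
  · rw [hv1, C.margin_left u hu, C'.margin_left u hu]
  obtain ⟨x, hx⟩ := surj_aux F hFc hF0 hF1 ⟨h0u, hu1⟩
  obtain ⟨y, hy⟩ := surj_aux G hGc hG0 hG1 ⟨h0v, hv1⟩
  rw [← hx, ← hy]
  exact h x y
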